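/- Let G be a finite p-group and d ≥ 0 such that G^{(d+1)} ≠ 1. Then |G^{(d)} / G^{(d+1)}| ≥ p^{2^d + 1}. -/

import Mathlib

namespace HallDerivedAux

universe u

variable {G : Type u} [Group G]

/-- Iterated commutator with `⊤`: `itc A j = [A, G, G, ..., G]` (`j` copies of `G`). -/
def itc (A : Subgroup G) : ℕ → Subgroup G
  | 0 => A
  | n + 1 => ⁅itc A n, ⊤⁆

@[simp] theorem itc_zero (A : Subgroup G) : itc A 0 = A := rfl

theorem itc_succ (A : Subgroup G) (n : ℕ) : itc A (n + 1) = ⁅itc A n, ⊤⁆ := rfl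

theorem itc_normal (A : Subgroup G) (hA : A.Normal) (n : ℕ) : (itc A n).Normal := by
  induction n with
  | zero => exact hA
  | succ n ih => exact
      haveI := ih
      (by infer_instance : (⁅itc A n, ⊤⁆ : Subgroup G).Normal)

theorem itc_succ_le (A : Subgroup G) (hA : A.Normal) (n : ℕ) : itc A (n + 1) ≤ itc A n :=
  haveI := itc_normal A hA n
  Subgroup.commutator_le_left _ _

theorem itc_antitone (A : Subgroup G) (hA : A.Normal) {i j : ℕ} (h : i ≤ j) :
    itc A j ≤ itc A i := by
  induction j with
  | zero => simp_all
  | succ j ih =>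
    rcases Nat.lt_or_ge i (j+1) with h' | h'
    · exact (itc_succ_le A hA j).trans (ih (Nat.lt_succ_iff.mp h'))
    · have : i = j + 1 := le_antisymm h h'
      subst this; exact le_rfl

theorem itc_le_self (A : Subgroup G) (hA : A.Normal) (n : ℕ) : itc A n ≤ A :=
  itc_antitone A hA (Nat.zero_le n)

theorem itc_add (A : Subgroup G) (i j : ℕ) : itc A (i + j) = itc (itc A i) j := by
  induction j with
  | zero => rfl
  | succ j ih => rw [← Nat.add_assoc, itc_succ, ih, itc_succ]

theorem itc_map {G' : Type u} [Group G'] (f : G →* G') (hf : Function.Surjective f)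
    (A : Subgroup G) (n : ℕ) : (itc A n).map f = itc (A.map f) n := by
  induction n with
  | zero => rfl
  | succ n ih =>
    rw [itc_succ, Subgroup.map_commutator, ih, Subgroup.map_top_of_surjective f hf, itc_succ]

theorem lcs_eq_itc_top (n : ℕ) : Subgroup.lowerCentralSeries (⊤ : Subgroup G) n = itc (⊤ : Subgroup G) n := by
  induction n with
  | zero => rfl
  | succ n ih =>
    have h : Subgroup.lowerCentralSeries (⊤ : Subgroup G) (n + 1) = ⁅Subgroup.lowerCentralSeries (⊤ : Subgroup G) n, ⊤⁆ := rfl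
    rw [h, ih, itc_succ]

/-- Key three-subgroups style lemma: for a normal subgroup `A`,
`[A, γ_{j+1}(G)] ≤ [A, G, ..., G]` (`j+1` copies). -/
theorem comm_lcs_le : ∀ (j : ℕ) {G : Type u} [Group G] (A : Subgroup G), A.Normal →
    ⁅A, Subgroup.lowerCentralSeries (⊤ : Subgroup G) j⁆ ≤ itc A (j + 1) := by
  intro j
  induction j with
  | zero =>
    intro G _ A _
    rw [lowerCentralSeries_zero, itc_succ, itc_zero]
  | succ j ih =>
    intro G _ A hA
    set T := itc A (j + 2) with hT
    haveI hTn : T.Normal := itc_normal A hA _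
    set π := QuotientGroup.mk' T with hπdef
    have hπ : Function.Surjective π := QuotientGroup.mk'_surjective T
    have hmapT : T.map π = ⊥ := by
      rw [Subgroup.map_eq_bot_iff, QuotientGroup.ker_mk']
    have hAn : (A.map π).Normal := hA.map π hπ
    -- reduce to the quotient
    rw [← QuotientGroup.ker_mk' T, ← Subgroup.map_eq_bot_iff (f := QuotientGroup.mk' T)]
    rw [Subgroup.map_commutator]
    have hlcs : (Subgroup.lowerCentralSeries (⊤ : Subgroup G) (j + 1)).map π =
        Subgroup.lowerCentralSeries (⊤ : Subgroup (G ⧸ T)) (j + 1) := by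
      rw [lcs_eq_itc_top, itc_map π hπ, Subgroup.map_top_of_surjective π hπ, lcs_eq_itc_top]
    rw [hlcs]
    -- now fully in the quotient
    have key : ⁅⁅Subgroup.lowerCentralSeries (⊤ : Subgroup (G ⧸ T)) j, (⊤ : Subgroup (G ⧸ T))⁆, A.map π⁆ = ⊥ := by
      apply Subgroup.commutator_commutator_eq_bot_of_rotate
      · -- ⁅⁅⊤, A.map π⁆, γ_j⁆ = ⊥
        rw [Subgroup.commutator_comm (⊤ : Subgroup (G ⧸ T)) (A.map π)]
        have h1 : ⁅A.map π, (⊤ : Subgroup (G ⧸ T))⁆ = itc (A.map π) 1 := rfl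
        rw [h1]
        refine le_bot_iff.mp (le_trans (ih (itc (A.map π) 1)
          (itc_normal (A.map π) hAn 1)) ?_)
        rw [← itc_add]
        have : (1 : ℕ) + (j + 1) = j + 2 := by omega
        rw [this, ← itc_map π hπ, hmapT]
      · -- ⁅⁅A.map π, γ_j⁆, ⊤⁆ = ⊥
        refine le_bot_iff.mp (le_trans (Subgroup.commutator_mono
          (ih (A.map π) hAn) le_rfl) ?_)
        have h2 : ⁅itc (A.map π) (j + 1), (⊤ : Subgroup (G ⧸ T))⁆ = itc (A.map π) (j + 2) :=
          rfl
        rw [h2, ← itc_map π hπ, hmapT]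
    have hsucc : Subgroup.lowerCentralSeries (⊤ : Subgroup (G ⧸ T)) (j + 1)
        = ⁅Subgroup.lowerCentralSeries (⊤ : Subgroup (G ⧸ T)) j, (⊤ : Subgroup (G ⧸ T))⁆ := rfl
    rw [hsucc, Subgroup.commutator_comm]
    exact key

/-- `G^(d) ≤ γ_{2^d}` (with mathlib's 0-based lower central series indexing). -/
theorem derived_le_lcs (G : Type u) [Group G] (d : ℕ) :
    derivedSeries G d ≤ Subgroup.lowerCentralSeries (⊤ : Subgroup G) (2 ^ d - 1) := by
  induction d with
  | zero => rw [derivedSeries_zero]; norm_num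
  | succ d ih =>
    have h1 : (1 : ℕ) ≤ 2 ^ d := Nat.one_le_two_pow
    rw [derivedSeries_succ]
    have step := comm_lcs_le (2 ^ d - 1) (Subgroup.lowerCentralSeries (⊤ : Subgroup G) (2 ^ d - 1))
      (Subgroup.lowerCentralSeries_normal ⊤ (2 ^ d - 1))
    have hitc : itc (Subgroup.lowerCentralSeries (⊤ : Subgroup G) (2 ^ d - 1)) (2 ^ d - 1 + 1) =
        Subgroup.lowerCentralSeries (⊤ : Subgroup G) (2 ^ (d + 1) - 1) := by
      rw [lcs_eq_itc_top, ← itc_add, ← lcs_eq_itc_top]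
      congr 1
      have : 2 ^ (d + 1) = 2 ^ d + 2 ^ d := by rw [pow_succ]; omega
      omega
    calc ⁅derivedSeries G d, derivedSeries G d⁆
        ≤ ⁅Subgroup.lowerCentralSeries (⊤ : Subgroup G) (2 ^ d - 1), Subgroup.lowerCentralSeries (⊤ : Subgroup G) (2 ^ d - 1)⁆ :=
          Subgroup.commutator_mono ih ih
      _ ≤ itc (Subgroup.lowerCentralSeries (⊤ : Subgroup G) (2 ^ d - 1)) (2 ^ d - 1 + 1) := step
      _ = Subgroup.lowerCentralSeries (⊤ : Subgroup G) (2 ^ (d + 1) - 1) := hitc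

theorem eq_bot_of_comm_top_eq_self [Finite G] {p : ℕ} (hp : p.Prime) (hG : IsPGroup p G)
    {B : Subgroup G} (hB : ⁅B, (⊤ : Subgroup G)⁆ = B) : B = ⊥ := by
  haveI : Fact p.Prime := ⟨hp⟩
  haveI : Group.IsNilpotent G := hG.isNilpotent
  obtain ⟨n, hn⟩ := nilpotent_iff_lowerCentralSeries.mp this
  have : ∀ j, B ≤ Subgroup.lowerCentralSeries (⊤ : Subgroup G) j := by
    intro j
    induction j with
    | zero => exact le_top
    | succ j ih =>
      rw [← hB, lowerCentralSeries_succ]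
      exact Subgroup.commutator_mono ih le_rfl
  exact le_bot_iff.mp (hn ▸ this n)

end HallDerivedAux

open HallDerivedAux
open scoped Pointwise commutatorElement

/-- Hall's lower bound: if `G` is a finite `p`-group with `G^(d+1) ≠ 1`, then
`|G^(d)/G^(d+1)| ≥ p^(2^d+1)`. -/
theorem hall_derived_quotient_bound {p : ℕ} (hp : p.Prime) {G : Type*} [Group G]
    [Finite G] (hG : IsPGroup p G) (d : ℕ) (hd : derivedSeries G (d + 1) ≠ ⊥) :
    p ^ (2 ^ d + 1) ≤ (derivedSeries G (d + 1)).relIndex (derivedSeries G d) := by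
  classical
  haveI : Fact p.Prime := ⟨hp⟩
  set N : Subgroup G := derivedSeries G d with hNdef
  set E : Subgroup G := derivedSeries G (d + 1) with hEdef
  have hNnormal : N.Normal := derivedSeries_normal G d
  have hEN : E = ⁅N, N⁆ := derivedSeries_succ G d
  have hc1 : 2 ^ d - 1 + 1 = 2 ^ d := Nat.sub_add_cancel Nat.one_le_two_pow
  have hF1 : N ≤ Subgroup.lowerCentralSeries (⊤ : Subgroup G) (2 ^ d - 1) := derived_le_lcs G d
  -- E is contained in M (2^d)
  have hEc : E ≤ itc N (2 ^ d) := by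
    rw [hEN]
    refine le_trans (Subgroup.commutator_mono le_rfl hF1) ?_
    have := comm_lcs_le (2 ^ d - 1) N hNnormal
    rwa [hc1] at this
  -- relIndexes in a p-group are powers of p
  have ppow : ∀ H K : Subgroup G, ∃ k : ℕ, H.relIndex K = p ^ k := by
    intro H K
    exact (hG.to_subgroup K).index (H.subgroupOf K)
  -- chain counting
  have steps : ∀ t : ℕ, E ≤ itc N t → ∀ j : ℕ, j + 1 ≤ t →
      (itc N 1).relIndex N * p ^ j ≤ (itc N (j + 1)).relIndex N := by
    intro t hEt j
    induction j with
    | zero => simp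
    | succ j ih =>
      intro hjt
      have hle1 : itc N (j + 2) ≤ itc N (j + 1) := itc_succ_le N hNnormal (j + 1)
      have hle2 : itc N (j + 1) ≤ N := itc_le_self N hNnormal (j + 1)
      have hne : itc N (j + 2) ≠ itc N (j + 1) := by
        intro heq
        have hfix : ⁅itc N (j + 1), (⊤ : Subgroup G)⁆ = itc N (j + 1) := by
          rw [← itc_succ]; exact heq
        have hbot : itc N (j + 1) = ⊥ := eq_bot_of_comm_top_eq_self hp hG hfix
        have : E ≤ itc N (j + 1) := le_trans hEt (itc_antitone N hNnormal (by omega))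
        exact hd (le_bot_iff.mp (hbot ▸ this))
      have hstep : p ≤ (itc N (j + 2)).relIndex (itc N (j + 1)) := by
        obtain ⟨k, hk⟩ := ppow (itc N (j + 2)) (itc N (j + 1))
        have hk1 : k ≠ 0 := by
          intro h0
          rw [h0, pow_zero] at hk
          exact hne (le_antisymm hle1 (Subgroup.relIndex_eq_one.mp hk))
        calc p = p ^ 1 := (pow_one p).symm
          _ ≤ p ^ k := Nat.pow_le_pow_right hp.one_le (Nat.one_le_iff_ne_zero.mpr hk1)
          _ = _ := hk.symm
      have hmul := Subgroup.relIndex_mul_relIndex (itc N (j + 2)) (itc N (j + 1)) N hle1 hle2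
      have hih := ih (by omega)
      calc (itc N 1).relIndex N * p ^ (j + 1)
          = p * ((itc N 1).relIndex N * p ^ j) := by ring
        _ ≤ (itc N (j + 2)).relIndex (itc N (j + 1)) * ((itc N (j + 1)).relIndex N) :=
            Nat.mul_le_mul hstep hih
        _ = (itc N (j + 2)).relIndex N := hmul
  -- final assembly from a bound on itc N t
  have finish : ∀ t : ℕ, E ≤ itc N t → p ^ (2 ^ d + 1) ≤ (itc N t).relIndex N →
      p ^ (2 ^ d + 1) ≤ E.relIndex N := by
    intro t hEt hbound
    have hmul := Subgroup.relIndex_mul_relIndex E (itc N t) N hEt (itc_le_self N hNnormal t)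
    have hpos : 0 < E.relIndex (itc N t) := by
      have : (E.subgroupOf (itc N t)).index ≠ 0 := Subgroup.index_ne_zero_of_finite
      exact Nat.pos_of_ne_zero this
    calc p ^ (2 ^ d + 1) ≤ (itc N t).relIndex N := hbound
      _ ≤ E.relIndex (itc N t) * (itc N t).relIndex N := Nat.le_mul_of_pos_left _ hpos
      _ = E.relIndex N := hmul
  -- case analysis on r = relIndex (itc N 1) N
  obtain ⟨k, hk⟩ := ppow (itc N 1) N
  match k, hk with
  | 0, hk =>
    -- r = 1 : then N = [N, ⊤], so N = ⊥, contradiction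
    exfalso
    rw [pow_zero] at hk
    have hNle : N ≤ itc N 1 := Subgroup.relIndex_eq_one.mp hk
    have hfix : ⁅N, (⊤ : Subgroup G)⁆ = N :=
      le_antisymm (by haveI := hNnormal; exact Subgroup.commutator_le_left _ _) hNle
    have hbot : N = ⊥ := eq_bot_of_comm_top_eq_self hp hG hfix
    have : E ≤ N := hEN ▸ (Subgroup.commutator_le_left _ _ : ⁅N, N⁆ ≤ N)
    exact hd (le_bot_iff.mp (hbot ▸ this))
  | 1, hk =>
    -- cyclic case: N = ⟨x⟩ ⊔ [N,⊤] and E ≤ itc N (2^d + 1)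
    rw [pow_one] at hk
    -- build the cyclic quotient
    set K : Subgroup N := (itc N 1).subgroupOf N with hKdef
    haveI hKn : K.Normal := (itc_normal N hNnormal 1).subgroupOf N
    have hcard : Nat.card (↥N ⧸ K) = p := by
      rw [← Subgroup.index_eq_card]; exact hk
    haveI : IsCyclic (↥N ⧸ K) := isCyclic_of_prime_card hcard
    obtain ⟨g, hg⟩ := IsCyclic.exists_generator (α := ↥N ⧸ K)
    obtain ⟨x', hx'⟩ := QuotientGroup.mk'_surjective K g
    set x : G := (x' : G) with hxdef
    have hxN : x ∈ N := x'.2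
    have hM1N : itc N 1 ≤ N := itc_le_self N hNnormal 1
    have hNsup : N = Subgroup.zpowers x ⊔ itc N 1 := by
      apply le_antisymm
      · intro n hn
        obtain ⟨c, hc⟩ := Subgroup.mem_zpowers_iff.mp (hg (QuotientGroup.mk' K ⟨n, hn⟩))
        rw [← hx'] at hc
        have hc2 : QuotientGroup.mk' K (x' ^ c) = QuotientGroup.mk' K ⟨n, hn⟩ := by
          rw [map_zpow]; exact hc
        obtain ⟨z, hz, hzeq⟩ := (QuotientGroup.mk'_eq_mk' K).mp hc2
        have hzG : ((z : N) : G) ∈ itc N 1 := Subgroup.mem_subgroupOf.mp hz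
        have heq : n = x ^ c * ((z : N) : G) := by
          have := congrArg (fun y : N => (y : G)) hzeq
          push_cast at this
          rw [← this]
        rw [heq]
        exact Subgroup.mul_mem _
          (Subgroup.mem_sup_left (Subgroup.zpow_mem _ (Subgroup.mem_zpowers x) c))
          (Subgroup.mem_sup_right hzG)
      · exact sup_le ((Subgroup.zpowers_le).mpr hxN) hM1N
    -- the key containment E ≤ itc N (2^d + 1)
    set T : Subgroup G := itc N (2 ^ d + 1) with hTdef
    haveI hTn : T.Normal := itc_normal N hNnormal _
    set π := QuotientGroup.mk' T with hπdef
    have hπs : Function.Surjective π := QuotientGroup.mk'_surjective T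
    have hcommle : ⁅Subgroup.lowerCentralSeries (⊤ : Subgroup G) (2 ^ d - 1), itc N 1⁆ ≤ T := by
      rw [Subgroup.commutator_comm]
      refine le_trans (comm_lcs_le (2 ^ d - 1) (itc N 1) (itc_normal N hNnormal 1)) ?_
      rw [hc1, ← itc_add]
      have : (1 : ℕ) + 2 ^ d = 2 ^ d + 1 := by omega
      rw [this]
    have hcomm1 : ∀ m ∈ itc N 1, ⁅x, m⁆ ∈ T := fun m hm =>
      hcommle (Subgroup.commutator_mem_commutator (hF1 hxN) hm)
    have hcomm2 : ∀ m ∈ itc N 1, ∀ m' ∈ itc N 1, ⁅m, m'⁆ ∈ T := fun m hm m' hm' =>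
      hcommle (Subgroup.commutator_mem_commutator (hF1 (hM1N hm)) hm')
    have hCx : ∀ m ∈ itc N 1, Commute (π x) (π m) := by
      intro m hm
      rw [← commutatorElement_eq_one_iff_commute, ← map_commutatorElement]
      exact (QuotientGroup.eq_one_iff _).mpr (hcomm1 m hm)
    have hCmm : ∀ m ∈ itc N 1, ∀ m' ∈ itc N 1, Commute (π m) (π m') := by
      intro m hm m' hm'
      rw [← commutatorElement_eq_one_iff_commute, ← map_commutatorElement]
      exact (QuotientGroup.eq_one_iff _).mpr (hcomm2 m hm m' hm')
    -- decompose elements of N.map π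
    have hdecomp : ∀ a ∈ N.map π, ∃ (c : ℤ) (m : G), m ∈ itc N 1 ∧ a = (π x) ^ c * π m := by
      intro a ha
      rw [hNsup, Subgroup.map_sup] at ha
      haveI : ((itc N 1).map π).Normal := (itc_normal N hNnormal 1).map π hπs
      have ha' : a ∈ (((Subgroup.zpowers x).map π : Subgroup (G ⧸ T)) : Set (G ⧸ T)) *
          (((itc N 1).map π : Subgroup (G ⧸ T)) : Set (G ⧸ T)) := by
        rw [← Subgroup.mul_normal]; exact_mod_cast ha
      obtain ⟨h, hh, m', hm', rfl⟩ := ha'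
      rw [(MonoidHom.map_zpowers π x : (Subgroup.zpowers x).map π = Subgroup.zpowers (π x))]
        at hh
      obtain ⟨c, hc⟩ := Subgroup.mem_zpowers_iff.mp hh
      obtain ⟨m, hm, rfl⟩ := hm'
      exact ⟨c, m, hm, by rw [hc]⟩
    -- N.map π is commutative, so E ≤ T
    have hEB : E ≤ itc N (2 ^ d + 1) := by
      have hmapbot : E.map π = ⊥ := by
        rw [hEN, Subgroup.map_commutator,
          Subgroup.commutator_eq_bot_iff_le_centralizer]
        intro a ha
        rw [Subgroup.mem_centralizer_iff]
        intro b hb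
        obtain ⟨c, m, hm, rfl⟩ := hdecomp a ha
        obtain ⟨c', m', hm', rfl⟩ := hdecomp b hb
        have h1 : Commute ((π x) ^ c) ((π x) ^ c') := (Commute.refl (π x)).zpow_zpow c c'
        have h2 : Commute ((π x) ^ c) (π m') := (hCx m' hm').zpow_left c
        have h3 : Commute (π m) ((π x) ^ c') := ((hCx m hm).symm).zpow_right c'
        have h4 : Commute (π m) (π m') := hCmm m hm m' hm'
        exact (((h1.mul_right h2).mul_left (h3.mul_right h4)) :
          Commute ((π x) ^ c * π m) ((π x) ^ c' * π m')).symm.eq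
      rw [Subgroup.map_eq_bot_iff, QuotientGroup.ker_mk'] at hmapbot
      exact hmapbot
    -- conclude
    refine finish (2 ^ d + 1) hEB ?_
    have := steps (2 ^ d + 1) hEB (2 ^ d) le_rfl
    rw [hk] at this
    calc p ^ (2 ^ d + 1) = p * p ^ (2 ^ d) := by ring
      _ ≤ _ := this
  | (k + 2), hk =>
    -- big top quotient case
    refine finish (2 ^ d) hEc ?_
    have hstep := steps (2 ^ d) hEc (2 ^ d - 1) (by omega)
    rw [hc1] at hstep
    have hr : p ^ 2 ≤ (itc N 1).relIndex N := by
      rw [hk]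
      exact Nat.pow_le_pow_right hp.one_le (by omega)
    calc p ^ (2 ^ d + 1) = p ^ 2 * p ^ (2 ^ d - 1) := by
          rw [← pow_add]; congr 1; omega
      _ ≤ (itc N 1).relIndex N * p ^ (2 ^ d - 1) :=
          Nat.mul_le_mul_right _ hr
      _ ≤ _ := hstep
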